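/- Let e₁, e₂, e₃ be the standard basis of ℝ³ and b_ij = (e_i + e_j)/√2 for 1 ≤ i < j ≤ 3. Let F be the set of functions p from the unit sphere S² ⊂ ℝ³ to ℝ such that p is bounded below, p(−x) = p(x) for all x, and there is a constant δ with p(x) + p(y) + p(z) = δ for every orthonormal triple x, y, z ∈ S²; let F₀ = {p ∈ F : p(e_i) = 0 for i = 1,2,3 and p(b_ij) = 0 for 1 ≤ i < j ≤ 3}. Then the following are equivalent: (a) for every p ∈ F there is a self-adjoint (symmetric) operator W on ℝ³ such that p(x) = ⟨x, W x⟩ for all x ∈ S²; (b) every p ∈ F₀ vanishes identically. -/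

import Mathlib

noncomputable section

/-- The standard basis vectors of `ℝ³`. -/
def stdE (i : Fin 3) : EuclideanSpace ℝ (Fin 3) := EuclideanSpace.single i 1

/-- The vectors `b_ij = (e_i + e_j)/√2`. -/
def stdB (i j : Fin 3) : EuclideanSpace ℝ (Fin 3) :=
  (Real.sqrt 2)⁻¹ • (stdE i + stdE j)

/-- A frame function on the unit sphere of `ℝ³`: bounded below, even, with constant
sum `δ` over every orthonormal triple. -/
def IsFrameFunction (p : EuclideanSpace ℝ (Fin 3) → ℝ) : Prop :=
  (∃ γ : ℝ, ∀ x : EuclideanSpace ℝ (Fin 3), ‖x‖ = 1 → γ ≤ p x) ∧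
  (∀ x : EuclideanSpace ℝ (Fin 3), ‖x‖ = 1 → p (-x) = p x) ∧
  ∃ δ : ℝ, ∀ x y z : EuclideanSpace ℝ (Fin 3), ‖x‖ = 1 → ‖y‖ = 1 → ‖z‖ = 1 →
    (inner ℝ x y : ℝ) = 0 → (inner ℝ x z : ℝ) = 0 → (inner ℝ y z : ℝ) = 0 →
    p x + p y + p z = δ

open scoped RealInnerProductSpace

namespace GleasonAux

abbrev E3 := EuclideanSpace ℝ (Fin 3)

lemma inner_stdE (i j : Fin 3) : ⟪stdE i, stdE j⟫ = if i = j then (1:ℝ) else 0 := by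
  simp [stdE, EuclideanSpace.inner_single_left, EuclideanSpace.single_apply, eq_comm]

lemma norm_stdE (i : Fin 3) : ‖stdE i‖ = 1 := by simp [stdE]

lemma inner_single_left' (i : Fin 3) (v : E3) : ⟪stdE i, v⟫ = v i := by
  simp [stdE, EuclideanSpace.inner_single_left]

lemma norm_stdB {i j : Fin 3} (hij : i ≠ j) : ‖stdB i j‖ = 1 := by
  have h : ⟪stdB i j, stdB i j⟫ = 1 := by
    simp only [stdB, real_inner_smul_left, real_inner_smul_right, inner_add_left,
      inner_add_right, inner_stdE]
    simp only [if_pos rfl, if_true, if_neg hij, if_neg hij.symm]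
    have h2 : Real.sqrt 2 * Real.sqrt 2 = 2 := Real.mul_self_sqrt (by norm_num)
    have h3 : Real.sqrt 2 ≠ 0 := by positivity
    field_simp
    nlinarith [h2]
  have := norm_eq_sqrt_real_inner (stdB i j)
  rw [this, h, Real.sqrt_one]

lemma sum_inner_basis (W : E3 →ₗ[ℝ] E3) (b : OrthonormalBasis (Fin 3) ℝ E3) :
    ∑ i, ⟪b i, W (b i)⟫ = LinearMap.trace ℝ E3 W := by
  rw [LinearMap.trace_eq_matrix_trace ℝ b.toBasis, Matrix.trace]
  congr 1
  ext i
  rw [Matrix.diag_apply, LinearMap.toMatrix_apply, OrthonormalBasis.coe_toBasis_repr_apply,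
    OrthonormalBasis.repr_apply_apply, OrthonormalBasis.coe_toBasis, real_inner_comm]

lemma triple_orthonormal {x y z : E3} (hx : ‖x‖ = 1) (hy : ‖y‖ = 1) (hz : ‖z‖ = 1)
    (hxy : ⟪x,y⟫ = 0) (hxz : ⟪x,z⟫ = 0) (hyz : ⟪y,z⟫ = 0) :
    Orthonormal ℝ ![x, y, z] := by
  rw [orthonormal_iff_ite]
  intro i j
  have h1 : ⟪x,x⟫ = 1 := by rw [real_inner_self_eq_norm_sq, hx]; norm_num
  have h2 : ⟪y,y⟫ = 1 := by rw [real_inner_self_eq_norm_sq, hy]; norm_num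
  have h3 : ⟪z,z⟫ = 1 := by rw [real_inner_self_eq_norm_sq, hz]; norm_num
  fin_cases i <;> fin_cases j <;>
    simp only [Matrix.cons_val_zero, Matrix.cons_val_one, Matrix.head_cons, Matrix.cons_val_two,
      Matrix.tail_cons, Fin.mk_zero, Fin.mk_one, if_true, if_false, Fin.isValue] <;>
    first
      | exact h1 | exact h2 | exact h3 | exact hxy | exact hxz | exact hyz
      | (rw [real_inner_comm]; first | exact hxy | exact hxz | exact hyz)

lemma quad_sum (W : E3 →ₗ[ℝ] E3) {x y z : E3} (hx : ‖x‖ = 1) (hy : ‖y‖ = 1) (hz : ‖z‖ = 1)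
    (hxy : ⟪x,y⟫ = 0) (hxz : ⟪x,z⟫ = 0) (hyz : ⟪y,z⟫ = 0) :
    ⟪x, W x⟫ + ⟪y, W y⟫ + ⟪z, W z⟫ = LinearMap.trace ℝ E3 W := by
  have hv := triple_orthonormal hx hy hz hxy hxz hyz
  set b : OrthonormalBasis (Fin 3) ℝ E3 :=
    (basisOfOrthonormalOfCardEqFinrank hv (by simp)).toOrthonormalBasis
      (by rw [coe_basisOfOrthonormalOfCardEqFinrank]; exact hv) with hb
  have hcoe : ⇑b = ![x, y, z] := by
    rw [hb, Module.Basis.coe_toOrthonormalBasis, coe_basisOfOrthonormalOfCardEqFinrank]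
  have := sum_inner_basis W b
  rw [Fin.sum_univ_three, hcoe] at this
  simpa using this

lemma inner_W_single (M : Matrix (Fin 3) (Fin 3) ℝ) (k l : Fin 3) :
    ⟪stdE k, Matrix.toEuclideanLin M (stdE l)⟫ = M k l := by
  rw [inner_single_left']
  show (M.mulVec ((WithLp.equiv 2 _) (stdE l))) k = M k l
  simp [stdE, Matrix.mulVec, dotProduct, EuclideanSpace.single_apply]

lemma inner_W_stdB (W : E3 →ₗ[ℝ] E3) (i j : Fin 3) :
    ⟪stdB i j, W (stdB i j)⟫ =
      ((Real.sqrt 2)⁻¹)^2 * (⟪stdE i, W (stdE i)⟫ + ⟪stdE i, W (stdE j)⟫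
        + ⟪stdE j, W (stdE i)⟫ + ⟪stdE j, W (stdE j)⟫) := by
  simp only [stdB, map_smul, map_add, real_inner_smul_left, real_inner_smul_right,
    inner_add_left, inner_add_right]
  ring

end GleasonAux

open GleasonAux

/-- Gleason's theorem for frame functions on `ℝ³` is equivalent to the statement that
every frame function vanishing on the `e_i` and the `b_ij` vanishes identically. -/
theorem gleason_iff_F0_vanishes :
    (∀ p : EuclideanSpace ℝ (Fin 3) → ℝ, IsFrameFunction p →
      ∃ W : EuclideanSpace ℝ (Fin 3) →ₗ[ℝ] EuclideanSpace ℝ (Fin 3), W.IsSymmetric ∧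
        ∀ x : EuclideanSpace ℝ (Fin 3), ‖x‖ = 1 → p x = (inner ℝ x (W x) : ℝ)) ↔
    (∀ p : EuclideanSpace ℝ (Fin 3) → ℝ, IsFrameFunction p →
      (∀ i : Fin 3, p (stdE i) = 0) → (∀ i j : Fin 3, i < j → p (stdB i j) = 0) →
      ∀ x : EuclideanSpace ℝ (Fin 3), ‖x‖ = 1 → p x = 0) := by
  constructor
  · -- (a) → (b)
    intro H p hp hE hB x hx
    obtain ⟨W, hWsym, hW⟩ := H p hp
    -- all matrix entries of W vanish
    have hdiag : ∀ i, ⟪stdE i, W (stdE i)⟫ = 0 := fun i => by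
      rw [← hW _ (norm_stdE i)]; exact hE i
    have hoff : ∀ i j, i < j → ⟪stdE i, W (stdE j)⟫ = 0 := by
      intro i j hij
      have hne : i ≠ j := ne_of_lt hij
      have h0 : ⟪stdB i j, W (stdB i j)⟫ = 0 := by
        rw [← hW _ (norm_stdB hne)]; exact hB i j hij
      rw [inner_W_stdB] at h0
      have hsym : ⟪stdE j, W (stdE i)⟫ = ⟪stdE i, W (stdE j)⟫ := by
        rw [real_inner_comm, hWsym]
      rw [hdiag, hdiag, hsym] at h0
      have h2 : ((Real.sqrt 2)⁻¹)^2 ≠ 0 := by positivity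
      have := mul_eq_zero.mp h0
      rcases this with h | h
      · exact absurd h h2
      · linarith
    have hall : ∀ i j, ⟪stdE i, W (stdE j)⟫ = 0 := by
      intro i j
      rcases lt_trichotomy i j with h | h | h
      · exact hoff i j h
      · rw [h]; exact hdiag j
      · rw [real_inner_comm, hWsym]; exact hoff j i h
    have hW0 : W = 0 := by
      apply (EuclideanSpace.basisFun (Fin 3) ℝ).toBasis.ext
      intro j
      have hb : (EuclideanSpace.basisFun (Fin 3) ℝ).toBasis j = stdE j := by
        simp [stdE, EuclideanSpace.basisFun_apply]
      rw [hb]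
      ext i
      have := hall i j
      rw [inner_single_left'] at this
      simpa using this
    rw [hW x hx, hW0]
    simp
  · -- (b) → (a)
    intro H0 p hp
    obtain ⟨⟨γ, hγ⟩, heven, δ, hδ⟩ := hp
    set a : Fin 3 → ℝ := fun i => p (stdE i) with ha
    set M : Matrix (Fin 3) (Fin 3) ℝ := fun i j =>
      if i = j then a i
      else (if i < j then p (stdB i j) else p (stdB j i)) - (a i + a j) / 2 with hM
    have hherm : M.IsHermitian := by
      rw [Matrix.IsHermitian]
      ext i j
      simp only [Matrix.conjTranspose_apply, RCLike.star_def, starRingEnd_apply, star_trivial]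
      rcases lt_trichotomy i j with h | h | h
      · rw [hM]
        simp only [if_neg (ne_of_gt h : j ≠ i), if_neg (ne_of_lt h : i ≠ j),
          if_neg (not_lt.mpr (le_of_lt h)), if_pos h]
        ring_nf
      · rw [h]
      · rw [hM]
        simp only [if_neg (ne_of_gt h : i ≠ j), if_neg (ne_of_lt h : j ≠ i),
          if_neg (not_lt.mpr (le_of_lt h)), if_pos h]
        ring_nf
    set W : E3 →ₗ[ℝ] E3 := Matrix.toEuclideanLin M with hWdef
    have hWsym : W.IsSymmetric := Matrix.isHermitian_iff_isSymmetric.mp hherm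
    refine ⟨W, hWsym, ?_⟩
    set q : E3 → ℝ := fun x => ⟪x, W x⟫ with hq
    -- q equals p on the stdE and stdB points
    have hqE : ∀ i, q (stdE i) = p (stdE i) := by
      intro i
      rw [hq]
      simp only
      rw [hWdef, inner_W_single, hM]
      simp [ha]
    have hqB : ∀ i j, i < j → q (stdB i j) = p (stdB i j) := by
      intro i j hij
      have h2 : ((Real.sqrt 2)⁻¹)^2 = 1/2 := by
        rw [← Real.sqrt_inv]
        rw [Real.sq_sqrt] <;> norm_num
      rw [hq]
      simp only
      rw [inner_W_stdB, hWdef, inner_W_single, inner_W_single, inner_W_single, inner_W_single,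
        h2, hM]
      simp only [if_pos rfl, if_true, if_neg (ne_of_lt hij), if_neg (ne_of_gt hij),
        if_pos hij, if_neg (not_lt.mpr (le_of_lt hij))]
      ring
    -- bound on q over the sphere
    set W' : E3 →L[ℝ] E3 := LinearMap.toContinuousLinearMap W with hW'
    have hqbound : ∀ x : E3, ‖x‖ = 1 → q x ≤ ‖W'‖ := by
      intro x hx
      have h1 : q x ≤ ‖x‖ * ‖W x‖ := real_inner_le_norm x (W x)
      have h2 : ‖W x‖ = ‖W' x‖ := rfl
      have h3 : ‖W' x‖ ≤ ‖W'‖ * ‖x‖ := W'.le_opNorm x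
      rw [hx] at h1 h3
      simp only [one_mul, mul_one] at h1 h3
      rw [h2] at h1
      linarith
    -- p - q is a frame function
    have hpq : IsFrameFunction (fun x => p x - q x) := by
      refine ⟨⟨γ - ‖W'‖, fun x hx => ?_⟩, fun x hx => ?_, δ - LinearMap.trace ℝ E3 W,
        fun x y z hx hy hz hxy hxz hyz => ?_⟩
      · have := hγ x hx
        have := hqbound x hx
        simp only
        linarith
      · have h1 := heven x hx
        have h2 : q (-x) = q x := by rw [hq]; simp
        simp only [h1, h2]
      · have h1 := hδ x y z hx hy hz hxy hxz hyz
        have h2 := quad_sum W hx hy hz hxy hxz hyz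
        simp only
        rw [hq]
        simp only
        linarith
    have hzero := H0 (fun x => p x - q x) hpq
      (fun i => by rw [hqE i]; ring)
      (fun i j hij => by rw [hqB i j hij]; ring)
    intro x hx
    have := hzero x hx
    rw [hq] at this
    linarith [this]
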